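/- Under the same hypotheses as the k=1 FSDA formula for G₁, the first SDA iterate A₁ = A(I+G₀H₀)⁻¹A equals D^A_1 + L^A_{11} K^A_1 (L^A_{21})ᵀ where D^A_1 = D^{AGH}_0 D^A_0, L^A_{11} = [L^A_{10}, D^{AGH}_0 L^A_{10}], L^A_{21} = [L^A_{20}, D^{AᵀHG}_0 L^A_{20}], and K^A_1 = [[(L^A_{20})ᵀ D^{GH}_0 L^A_{10}, I],[I, 0]], with D^{AGH}_0 = D^A_0(I+D^G_0D^H_0)⁻¹, D^{AᵀHG}_0 = (D^A_0)ᵀ(I+D^H_0D^G_0)⁻¹, D^{GH}_0 = (I+D^G_0D^H_0)⁻¹. -/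

import Mathlib

open Matrix

/-- The `k = 1` FSDA factored form of `A₁`. -/
theorem fsda_A1 {N m : ℕ} (DA DG DH : Matrix (Fin N) (Fin N) ℝ)
    (L10 L20 : Matrix (Fin N) (Fin m) ℝ)
    (hDG : DG.IsSymm) (hDH : DH.IsSymm)
    (hinv : IsUnit (1 + DG * DH).det) :
    (DA + L10 * L20ᵀ) * (1 + DG * DH)⁻¹ * (DA + L10 * L20ᵀ) =
      (DA * (1 + DG * DH)⁻¹) * DA +
        Matrix.fromCols L10 ((DA * (1 + DG * DH)⁻¹) * L10) *
          (fromBlocks (L20ᵀ * (1 + DG * DH)⁻¹ * L10) 1 1 0 : Matrix (Fin m ⊕ Fin m) (Fin m ⊕ Fin m) ℝ) *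
          (Matrix.fromCols L20 ((DAᵀ * (1 + DH * DG)⁻¹) * L20))ᵀ := by
  have hT : ((1 + DH * DG)⁻¹)ᵀ = (1 + DG * DH)⁻¹ := by
    rw [transpose_nonsing_inv, transpose_add, transpose_one,
      transpose_mul, hDG.eq, hDH.eq]
  rw [transpose_fromCols, transpose_mul, transpose_mul, hT,
    fromCols_mul_fromBlocks, fromCols_mul_fromRows]
  simp only [Matrix.mul_one, Matrix.mul_zero, add_zero, Matrix.add_mul, Matrix.mul_add, Matrix.mul_assoc, Matrix.transpose_transpose]
  abel
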